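/- Let G be a 2-edge-connected graph and T a subset of vertices of G with |T| even. Then G has a T-join of size at most |E(G)|/2, i.e., there exists a subset J of E(G) with |J| ≤ |E(G)|/2 such that a vertex v has odd degree in the subgraph induced by J if and only if v ∈ T. -/

import Mathlib

open SimpleGraph

variable {V : Type*}

/-- `σ e = true` means the edge `e` is negative. Number of negative edges in `E`. -/
noncomputable def negCount (σ : Sym2 V → Bool) (E : Set (Sym2 V)) : ℕ :=
  (E ∩ {e | σ e = true}).ncard

/-- Number of negative edges in a list of edges (with multiplicity). -/
def listNegCount (σ : Sym2 V → Bool) (l : List (Sym2 V)) : ℕ :=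
  (l.filter fun e => σ e).length

/-- A circuit: a connected `2`-regular subgraph. -/
def IsCircuit (G : SimpleGraph V) (C : G.Subgraph) : Prop :=
  C.Connected ∧ ∀ v ∈ C.verts, (C.neighborSet v).ncard = 2

/-- A balanced circuit: even number of negative edges. -/
def IsBalancedCircuit (G : SimpleGraph V) (σ : Sym2 V → Bool) (C : G.Subgraph) : Prop :=
  IsCircuit G C ∧ Even (negCount σ C.edgeSet)

/-- An unbalanced circuit: odd number of negative edges. -/
def IsUnbalancedCircuit (G : SimpleGraph V) (σ : Sym2 V → Bool) (C : G.Subgraph) : Prop :=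
  IsCircuit G C ∧ Odd (negCount σ C.edgeSet)

/-- `P` is the subgraph of a (possibly trivial) path from `u` to `v`. -/
def IsPathSubgraph (G : SimpleGraph V) (P : G.Subgraph) (u v : V) : Prop :=
  ∃ w : G.Walk u v, w.IsPath ∧ P.verts = {x | x ∈ w.support} ∧
    P.edgeSet = {e | e ∈ w.edges}

/-- A barbell: two unbalanced circuits joined by a (possibly trivial) path
meeting the circuits only at its ends. -/
def IsBarbell (G : SimpleGraph V) (σ : Sym2 V → Bool) (H : G.Subgraph) : Prop :=
  ∃ (C₁ C₂ P : G.Subgraph) (u v : V),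
    IsUnbalancedCircuit G σ C₁ ∧ IsUnbalancedCircuit G σ C₂ ∧
    IsPathSubgraph G P u v ∧ u ∈ C₁.verts ∧ v ∈ C₂.verts ∧
    P.verts ∩ C₁.verts = {u} ∧ P.verts ∩ C₂.verts = {v} ∧
    C₁.verts ∩ C₂.verts ⊆ {u} ∩ {v} ∧
    C₁.edgeSet ∩ C₂.edgeSet = ∅ ∧
    H = C₁ ⊔ C₂ ⊔ P

/-- A sign-circuit: a balanced circuit or a barbell. -/
def IsSignCircuit (G : SimpleGraph V) (σ : Sym2 V → Bool) (H : G.Subgraph) : Prop :=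
  IsBalancedCircuit G σ H ∨ IsBarbell G σ H

/-- Flow-admissible: every edge lies in a sign-circuit (equivalently, the signed
graph admits a nowhere-zero integer flow). -/
def FlowAdmissible (G : SimpleGraph V) (σ : Sym2 V → Bool) : Prop :=
  ∀ e ∈ G.edgeSet, ∃ H : G.Subgraph, IsSignCircuit G σ H ∧ e ∈ H.edgeSet

/-- Total length of a family of subgraphs. -/
noncomputable def coverLength (G : SimpleGraph V) (𝓕 : Multiset G.Subgraph) : ℕ :=
  (𝓕.map fun H => H.edgeSet.ncard).sum

/-- The family `𝓕` covers the edge set `E`. -/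
def Covers (G : SimpleGraph V) (𝓕 : Multiset G.Subgraph) (E : Set (Sym2 V)) : Prop :=
  ∀ e ∈ E, ∃ H ∈ 𝓕, e ∈ H.edgeSet

/-- Cubic graph: every vertex has degree `3`. -/
def IsCubic (G : SimpleGraph V) : Prop := ∀ v : V, (G.neighborSet v).ncard = 3

/-- `2`-edge-connected: connected and bridgeless. -/
def TwoEdgeConnected (G : SimpleGraph V) : Prop :=
  G.Connected ∧ ∀ e, ¬ G.IsBridge e

/-- Balanced signed graph: every circuit has an even number of negative edges. -/
def IsBalancedGraph (G : SimpleGraph V) (σ : Sym2 V → Bool) : Prop :=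
  ∀ C : G.Subgraph, IsCircuit G C → Even (negCount σ C.edgeSet)

/-- A `2`-factor: a spanning `2`-regular subgraph. -/
def IsTwoFactor (G : SimpleGraph V) (F : G.Subgraph) : Prop :=
  F.IsSpanning ∧ ∀ v : V, (F.neighborSet v).ncard = 2

/-- A proper 3-edge-coloring: edges sharing a vertex get different colors. -/
def Proper3EdgeColoring (G : SimpleGraph V) (c : Sym2 V → Fin 3) : Prop :=
  ∀ e ∈ G.edgeSet, ∀ f ∈ G.edgeSet, e ≠ f → (∃ x, x ∈ e ∧ x ∈ f) → c e ≠ c f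

/-- 3-edge-colorable graph. -/
def ThreeEdgeColorable (G : SimpleGraph V) : Prop :=
  ∃ c : Sym2 V → Fin 3, Proper3EdgeColoring G c

/-- `S` is a segment of the circuit `C` determined by a set `Mv` of vertices
(the vertex set of a component `M`): a maximal subpath of `C` whose endpoints
are attachments of `M` and whose internal vertices are not in `M`. -/
def IsSegment (G : SimpleGraph V) (C : G.Subgraph) (Mv : Set V) (S : G.Subgraph) : Prop :=
  ∃ (a b : V) (w : G.Walk a b),
    w.edges ≠ [] ∧ w.support.tail.Nodup ∧
    (∀ e ∈ w.edges, e ∈ C.edgeSet) ∧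
    a ∈ Mv ∧ b ∈ Mv ∧
    (∀ x ∈ w.support, x ∈ Mv → x = a ∨ x = b) ∧
    S.verts = {x | x ∈ w.support} ∧ S.edgeSet = {e | e ∈ w.edges}


section TJoinAux

variable {V : Type*} [Fintype V] [DecidableEq V]

private lemma z2self : ∀ a : ZMod 2, a + a = 0 := by decide

private lemma z2abc : ∀ A B C : ZMod 2, (A + B) + (B + C) = A + C := by decide

private def bdry (x : Sym2 V → ZMod 2) (v : V) : ZMod 2 :=
  ∑ e ∈ Finset.univ.filter (fun e => v ∈ e), x e

private lemma bdry_add (x y : Sym2 V → ZMod 2) (v : V) :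
    bdry (fun e => x e + y e) v = bdry x v + bdry y v := by
  simp [bdry, Finset.sum_add_distrib]

private lemma bdry_ind {u u' : V} (h : u ≠ u') (v : V) :
    bdry (fun e => if e = s(u,u') then (1 : ZMod 2) else 0) v
      = (if v = u then 1 else 0) + (if v = u' then 1 else 0) := by
  classical
  rw [bdry, Finset.sum_ite_eq' _ s(u,u')]
  simp only [Finset.mem_filter, Finset.mem_univ, true_and, Sym2.mem_iff]
  by_cases h1 : v = u
  · subst h1; simp [h]
  · by_cases h2 : v = u' <;> simp [h1, h2, Ne.symm h]

private def wvec {G : SimpleGraph V} {u v : V} (w : G.Walk u v) : Sym2 V → ZMod 2 :=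
  fun e => (w.edges.count e : ZMod 2)

omit [Fintype V] in
private lemma wvec_support {G : SimpleGraph V} {u v : V} (w : G.Walk u v)
    (e : Sym2 V) (h : wvec w e ≠ 0) : e ∈ G.edgeSet := by
  have he : e ∈ w.edges := by
    by_contra hc
    simp [wvec, List.count_eq_zero_of_not_mem hc] at h
  exact w.edges_subset_edgeSet he

private lemma bdry_wvec {G : SimpleGraph V} {u v : V} (w : G.Walk u v) (x : V) :
    bdry (wvec w) x = (if x = u then 1 else 0) + (if x = v then 1 else 0) := by
  induction w with
  | nil => simp [wvec, bdry, z2self]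
  | cons h p ih =>
    rename_i a b c
    have hw : wvec (SimpleGraph.Walk.cons h p)
        = fun e => (if e = s(a,b) then (1 : ZMod 2) else 0) + wvec p e := by
      funext e
      simp only [wvec, SimpleGraph.Walk.edges_cons, List.count_cons]
      push_cast
      rw [add_comm]
      congr 1
      by_cases he : e = s(a,b)
      · simp [he]
      · simp [beq_iff_eq, he, Ne.symm he]
    rw [hw, bdry_add, bdry_ind h.ne, ih, z2abc]

private lemma exists_kernel {G : SimpleGraph V} [DecidableRel G.Adj]
    (h2ec : TwoEdgeConnected G) (e : Sym2 V) (he : e ∈ G.edgeSet) :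
    ∃ z : Sym2 V → ZMod 2, (∀ f, z f ≠ 0 → f ∈ G.edgeSet) ∧
      (∀ v, bdry z v = 0) ∧ z e = 1 := by
  induction e with
  | h u v =>
    have hadj : G.Adj u v := he
    have hnb := h2ec.2 s(u,v)
    rw [SimpleGraph.isBridge_iff] at hnb
    push_neg at hnb
    obtain ⟨p'⟩ := hnb
    have hsub : ∀ f ∈ p'.edges, f ∈ G.edgeSet := by
      intro f hf
      have := p'.edges_subset_edgeSet hf
      exact (SimpleGraph.edgeSet_subset_edgeSet.2 sdiff_le) this
    let p : G.Walk u v := p'.transfer G hsub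
    have hpe : p.edges = p'.edges := SimpleGraph.Walk.edges_transfer p' hsub
    have hnot : s(u,v) ∉ p.edges := by
      rw [hpe]
      intro hc
      have := p'.edges_subset_edgeSet hc
      simp [SimpleGraph.edgeSet_deleteEdges, SimpleGraph.edgeSet_sdiff, SimpleGraph.edgeSet_fromEdgeSet,
        Sym2.mk_isDiag_iff, hadj.ne] at this
    refine ⟨fun f => wvec p f + (if f = s(u,v) then 1 else 0), ?_, ?_, ?_⟩
    · intro f hf
      by_cases hfe : f = s(u,v)
      · exact hfe ▸ he
      · simp only [hfe, if_false, add_zero] at hf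
        exact wvec_support p f hf
    · intro x
      rw [bdry_add, bdry_wvec, bdry_ind hadj.ne]
      exact z2self _
    · simp [wvec, List.count_eq_zero_of_not_mem hnot]

private lemma half_count (K : Finset (Sym2 V → ZMod 2))
    (hadd : ∀ a ∈ K, ∀ b ∈ K, (fun e => a e + b e) ∈ K)
    (e : Sym2 V) (z₀ : Sym2 V → ZMod 2) (hz₀ : z₀ ∈ K) (h1 : z₀ e = 1) (c : ZMod 2) :
    2 * (K.filter (fun z => z e = c)).card = K.card := by
  classical
  have hbij : ∀ c' : ZMod 2, (K.filter (fun z => z e = c')).card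
      = (K.filter (fun z => z e = c' + 1)).card := by
    intro c'
    apply Finset.card_bij' (fun z _ => fun f => z f + z₀ f) (fun z _ => fun f => z f + z₀ f)
    · intro z hz
      simp only [Finset.mem_filter] at hz ⊢
      exact ⟨hadd z hz.1 z₀ hz₀, by rw [h1, hz.2]⟩
    · intro z hz
      simp only [Finset.mem_filter] at hz ⊢
      refine ⟨hadd z hz.1 z₀ hz₀, by rw [h1, hz.2, add_assoc, z2self, add_zero]⟩
    · intro z _
      funext f
      rw [add_assoc, z2self, add_zero]
    · intro z _
      funext f
      rw [add_assoc, z2self, add_zero]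
  have hcompl : (K.filter (fun z => z e = c)).card
      + (K.filter (fun z => ¬ z e = c)).card = K.card :=
    Finset.card_filter_add_card_filter_not _
  have hne : (K.filter (fun z => ¬ z e = c)) = (K.filter (fun z => z e = c + 1)) := by
    apply Finset.filter_congr
    intro z _
    have key : ∀ a c : ZMod 2, (¬ a = c) ↔ a = c + 1 := by decide
    exact key _ _
  have h2 := hbij c
  have h3 : (K.filter (fun z => ¬ z e = c)).card
      = (K.filter (fun z => z e = c + 1)).card := by rw [hne]
  have hAB : (K.filter (fun z => z e = c)).card
      = (K.filter (fun z => ¬ z e = c)).card := h2.trans h3.symm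
  rw [two_mul]
  nth_rewrite 2 [hAB]
  exact hcompl

private lemma odd_iff_z2 (n : ℕ) : Odd n ↔ (n : ZMod 2) = 1 := by
  rw [Nat.odd_iff, ← ZMod.natCast_mod n 2]
  rcases Nat.mod_two_eq_zero_or_one n with h | h <;> simp [h]

private lemma even_z2 {n : ℕ} (h : Even n) : (n : ZMod 2) = 0 := by
  rw [← ZMod.natCast_mod n 2, Nat.even_iff.1 h]
  simp

end TJoinAux
/-- Wu–Ye T-join lemma. A 2-edge-connected graph `G` with
`T ⊆ V(G)` of even cardinality has a `T`-join of size at most `|E(G)|/2`. -/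
theorem stmt0 {V : Type*} [Fintype V] [DecidableEq V] (G : SimpleGraph V)
    [DecidableRel G.Adj]
    (h2ec : TwoEdgeConnected G) (T : Finset V) (hT : Even T.card) :
    ∃ J : Finset (Sym2 V), ↑J ⊆ G.edgeSet ∧ 2 * J.card ≤ G.edgeFinset.card ∧
      ∀ v : V, v ∈ T ↔ Odd (J.filter (fun e => v ∈ e)).card := by
  classical
  have hVne : Nonempty V := h2ec.1.nonempty
  obtain ⟨v₀⟩ := hVne
  have hz01 : ∀ a : ZMod 2, a ≠ 0 → a = 1 := by decide
  let w : ∀ t : V, G.Walk v₀ t := fun t => (h2ec.1.preconnected v₀ t).some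
  let x₀ : Sym2 V → ZMod 2 := fun e => ∑ t ∈ T, wvec (w t) e
  have hx₀supp : ∀ f, x₀ f ≠ 0 → f ∈ G.edgeFinset := by
    intro f hf
    by_contra hc
    apply hf
    apply Finset.sum_eq_zero
    intro t _
    by_contra hzz
    exact hc (SimpleGraph.mem_edgeFinset.2 (wvec_support _ _ hzz))
  have hx₀bd : ∀ v, bdry x₀ v = (if v ∈ T then 1 else 0) := by
    intro v
    have h1 : bdry x₀ v = ∑ t ∈ T, bdry (wvec (w t)) v := by
      simp only [bdry]
      rw [Finset.sum_comm]
    rw [h1]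
    simp only [bdry_wvec]
    rw [Finset.sum_add_distrib, Finset.sum_const, Finset.sum_ite_eq]
    simp [nsmul_eq_mul, even_z2 hT]
  set K : Finset (Sym2 V → ZMod 2) :=
    Finset.univ.filter (fun z => (∀ f, z f ≠ 0 → f ∈ G.edgeFinset) ∧ (∀ v, bdry z v = 0))
    with hKdef
  have hKmem : ∀ z : Sym2 V → ZMod 2,
      z ∈ K ↔ ((∀ f, z f ≠ 0 → f ∈ G.edgeFinset) ∧ (∀ v, bdry z v = 0)) := by
    intro z
    rw [hKdef, Finset.mem_filter]
    simp
  have hK0 : (fun _ : Sym2 V => (0 : ZMod 2)) ∈ K := by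
    rw [hKmem]
    exact ⟨fun f hf => absurd rfl hf, fun v => by simp [bdry]⟩
  have hKadd : ∀ a ∈ K, ∀ b ∈ K, (fun e => a e + b e) ∈ K := by
    intro a ha b hb
    rw [hKmem] at ha hb ⊢
    constructor
    · intro f hf
      by_cases h : a f = 0
      · exact hb.1 f (by rw [h, zero_add] at hf; exact hf)
      · exact ha.1 f h
    · intro v
      rw [bdry_add, ha.2 v, hb.2 v, add_zero]
  have hKcov : ∀ e ∈ G.edgeFinset, ∃ z ∈ K, z e = 1 := by
    intro e he
    obtain ⟨z, hs, hb, h1⟩ := exists_kernel h2ec e (SimpleGraph.mem_edgeFinset.1 he)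
    exact ⟨z, (hKmem z).2 ⟨fun f hf => SimpleGraph.mem_edgeFinset.2 (hs f hf), hb⟩, h1⟩
  have hsum : 2 * ∑ z ∈ K, (G.edgeFinset.filter (fun e => x₀ e + z e = 1)).card
      = G.edgeFinset.card * K.card := by
    have step1 : ∀ z : Sym2 V → ZMod 2,
        (G.edgeFinset.filter (fun e => x₀ e + z e = 1)).card
          = ∑ e ∈ G.edgeFinset, (if x₀ e + z e = 1 then 1 else 0) :=
      fun z => Finset.card_filter _ _
    calc 2 * ∑ z ∈ K, (G.edgeFinset.filter (fun e => x₀ e + z e = 1)).card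
        = 2 * ∑ e ∈ G.edgeFinset, (K.filter (fun z => x₀ e + z e = 1)).card := by
          simp only [step1]
          rw [Finset.sum_comm]
          simp only [← Finset.card_filter]
      _ = ∑ e ∈ G.edgeFinset, 2 * (K.filter (fun z => x₀ e + z e = 1)).card := by
          rw [Finset.mul_sum]
      _ = ∑ e ∈ G.edgeFinset, K.card := by
          apply Finset.sum_congr rfl
          intro e he
          obtain ⟨z₀, hz₀, hz₀1⟩ := hKcov e he
          have hfc : (K.filter (fun z => x₀ e + z e = 1))
              = (K.filter (fun z => z e = 1 + x₀ e)) := by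
            apply Finset.filter_congr
            intro z _
            have key : ∀ a b : ZMod 2, (a + b = 1) ↔ (b = 1 + a) := by decide
            exact key _ _
          rw [hfc, half_count K hKadd e z₀ hz₀ hz₀1]
      _ = G.edgeFinset.card * K.card := by rw [Finset.sum_const, smul_eq_mul]
  have hmin : ∃ z ∈ K, 2 * (G.edgeFinset.filter (fun e => x₀ e + z e = 1)).card
      ≤ G.edgeFinset.card := by
    by_contra hcon
    push_neg at hcon
    have hlb : ∀ z ∈ K, G.edgeFinset.card + 1
        ≤ 2 * (G.edgeFinset.filter (fun e => x₀ e + z e = 1)).card :=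
      fun z hz => hcon z hz
    have hKpos : 0 < K.card := Finset.card_pos.2 ⟨_, hK0⟩
    have h2 : K.card * (G.edgeFinset.card + 1)
        ≤ ∑ z ∈ K, 2 * (G.edgeFinset.filter (fun e => x₀ e + z e = 1)).card := by
      have := Finset.card_nsmul_le_sum K
        (fun z => 2 * (G.edgeFinset.filter (fun e => x₀ e + z e = 1)).card)
        (G.edgeFinset.card + 1) hlb
      simpa [smul_eq_mul] using this
    rw [← Finset.mul_sum, hsum] at h2
    nlinarith
  obtain ⟨z, hzK, hle⟩ := hmin
  have hzP := (hKmem z).1 hzK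
  refine ⟨G.edgeFinset.filter (fun e => x₀ e + z e = 1), ?_, ?_, ?_⟩
  · intro e he
    rw [Finset.mem_coe, Finset.mem_filter] at he
    exact SimpleGraph.mem_edgeFinset.1 he.1
  · exact hle
  · intro v
    have hxsupp : ∀ f, x₀ f + z f ≠ 0 → f ∈ G.edgeFinset := by
      intro f hf
      by_cases h : x₀ f = 0
      · exact hzP.1 f (by rw [h, zero_add] at hf; exact hf)
      · exact hx₀supp f h
    have hbd : bdry (fun e => x₀ e + z e) v = if v ∈ T then 1 else 0 := by
      rw [bdry_add, hx₀bd v, hzP.2 v, add_zero]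
    have hJS : ((G.edgeFinset.filter (fun e => x₀ e + z e = 1)).filter (fun e => v ∈ e))
        = (Finset.univ.filter (fun e : Sym2 V => v ∈ e)).filter
            (fun e => x₀ e + z e = 1) := by
      ext e
      simp only [Finset.mem_filter, Finset.mem_univ, true_and]
      constructor
      · rintro ⟨⟨_, h2⟩, h3⟩
        exact ⟨h3, h2⟩
      · rintro ⟨h3, h2⟩
        exact ⟨⟨hxsupp e (by rw [h2]; exact one_ne_zero), h2⟩, h3⟩
    have hcast : ((((G.edgeFinset.filter (fun e => x₀ e + z e = 1)).filter
        (fun e => v ∈ e)).card : ℕ) : ZMod 2) = bdry (fun e => x₀ e + z e) v := by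
      rw [hJS, bdry]
      rw [← Finset.sum_filter_of_ne
        (fun e _ h => hz01 _ h : ∀ e ∈ Finset.univ.filter (fun e : Sym2 V => v ∈ e),
          x₀ e + z e ≠ 0 → x₀ e + z e = 1)]
      rw [Finset.sum_congr rfl
        (fun e he => (Finset.mem_filter.1 he).2 :
          ∀ e ∈ (Finset.univ.filter (fun e : Sym2 V => v ∈ e)).filter
            (fun e => x₀ e + z e = 1), x₀ e + z e = (1 : ZMod 2))]
      simp [Finset.sum_const, nsmul_eq_mul]
    rw [odd_iff_z2, hcast, hbd]
    by_cases hv : v ∈ T <;> simp [hv]
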